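/- Let ρ_d > 0, ω > 0, b ∈ ℝ, and let α : [0,1] → (0, ∞) be continuous. Then there exists a unique real number λ solving the eigenvalue relation ρ_d·(λ/ω + 1) = ∫₀¹ α(x)·exp( (1/ρ_d)·∫₀ˣ (b − α(s) − λ) ds ) dx; equivalently, the eigenvalue problem ρ_d Ω'(x) = (b − λ − α(x))Ω(x) on [0,1], 0 = ∫₀¹ α(x)Ω(x) dx − (λ + ω)A, Ω(0) = ωA/ρ_d, ∫₀¹ Ω(x) dx = 1 has a unique solution (λ, Ω, A) with Ω > 0 and A > 0, and λ real is unique. Moreover λ > 0 if and only if ∫₀¹ α(x)·exp( (1/ρ_d)·∫₀ˣ (b − α(s)) ds ) dx > ρ_d, and λ < 0 if and only if ∫₀¹ α(x)·exp( (1/ρ_d)·∫₀ˣ (b − α(s)) ds ) dx < ρ_d. -/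

import Mathlib

open Real Set MeasureTheory intervalIntegral

/-- The scalar eigenvalue relation
`ρ (λ/ω + 1) = ∫₀¹ α(x) exp((1/ρ) ∫₀ˣ (b − α(s) − λ) ds) dx`. -/
def EigenRelation (ρ ω b : ℝ) (α : ℝ → ℝ) (lam : ℝ) : Prop :=
  ρ * (lam / ω + 1) =
    ∫ x in (0 : ℝ)..1,
      α x * Real.exp ((1 / ρ) * ∫ s in (0 : ℝ)..x, (b - α s - lam))

/-- The eigenvalue problem for `(λ, Ω, A)` : the ODE `ρ Ω' = (b − λ − α) Ω` on `[0,1]`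
(with derivative `Ωd`), `∫₀¹ α Ω dx = (λ + ω) A`, `Ω 0 = ω A / ρ`, `∫₀¹ Ω dx = 1`,
with `Ω > 0` on `[0,1]` and `A > 0`. -/
def IsEigenSolution (ρ ω b : ℝ) (α : ℝ → ℝ) (lam : ℝ) (Ω : ℝ → ℝ) (A : ℝ) : Prop :=
  (∃ Ωd : ℝ → ℝ, ∀ x ∈ Set.Icc (0 : ℝ) 1,
      HasDerivWithinAt Ω (Ωd x) (Set.Icc 0 1) x ∧
      ρ * Ωd x = (b - lam - α x) * Ω x) ∧
  (∫ x in (0 : ℝ)..1, α x * Ω x) = (lam + ω) * A ∧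
  Ω 0 = ω * A / ρ ∧
  (∫ x in (0 : ℝ)..1, Ω x) = 1 ∧
  (∀ x ∈ Set.Icc (0 : ℝ) 1, 0 < Ω x) ∧ 0 < A

theorem stmt5 (ρ ω b : ℝ) (hρ : 0 < ρ) (hω : 0 < ω) (α : ℝ → ℝ)
    (hαc : ContinuousOn α (Set.Icc 0 1))
    (hαpos : ∀ x ∈ Set.Icc (0 : ℝ) 1, 0 < α x) :
    (∃! lam : ℝ, EigenRelation ρ ω b α lam) ∧
    (∃ lam : ℝ, ∃ Ω : ℝ → ℝ, ∃ A : ℝ, IsEigenSolution ρ ω b α lam Ω A) ∧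
    (∀ lam₁ lam₂ : ℝ, ∀ Ω₁ Ω₂ : ℝ → ℝ, ∀ A₁ A₂ : ℝ,
      IsEigenSolution ρ ω b α lam₁ Ω₁ A₁ → IsEigenSolution ρ ω b α lam₂ Ω₂ A₂ →
      lam₁ = lam₂ ∧ A₁ = A₂ ∧ Set.EqOn Ω₁ Ω₂ (Set.Icc 0 1)) ∧
    (∀ lam : ℝ, EigenRelation ρ ω b α lam →
      ((0 < lam ↔
        (∫ x in (0 : ℝ)..1,
          α x * Real.exp ((1 / ρ) * ∫ s in (0 : ℝ)..x, (b - α s))) > ρ) ∧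
       (lam < 0 ↔
        (∫ x in (0 : ℝ)..1,
          α x * Real.exp ((1 / ρ) * ∫ s in (0 : ℝ)..x, (b - α s))) < ρ))) := by
  -- continuous extension of α
  set pr : ℝ → ℝ := fun x => max 0 (min 1 x) with hprdef
  have hprc : Continuous pr := continuous_const.max (continuous_const.min continuous_id)
  have hprmem : ∀ x, pr x ∈ Icc (0:ℝ) 1 :=
    fun x => ⟨le_max_left _ _, max_le zero_le_one (min_le_left _ _)⟩
  set β : ℝ → ℝ := fun x => α (pr x) with hβdef
  have hβc : Continuous β := hαc.comp_continuous hprc hprmem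
  have hβeq : ∀ x ∈ Icc (0:ℝ) 1, β x = α x := by
    intro x hx
    have : pr x = x := by
      simp only [hprdef, min_eq_right hx.2, max_eq_right hx.1]
    simp [hβdef, this]
  have hβpos : ∀ x, 0 < β x := fun x => hαpos _ (hprmem x)
  -- the primitive C
  set C : ℝ → ℝ := fun x => ∫ s in (0:ℝ)..x, (b - β s) with hCdef
  have hbβc : Continuous fun s => b - β s := continuous_const.sub hβc
  have hCderiv : ∀ x, HasDerivAt C (b - β x) x := fun x =>
    intervalIntegral.integral_hasDerivAt_right (hbβc.intervalIntegrable _ _)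
      (hbβc.stronglyMeasurableAtFilter _ _) hbβc.continuousAt
  have hCcont : Continuous C := by
    rw [continuous_iff_continuousAt]; exact fun x => (hCderiv x).continuousAt
  have hC0 : C 0 = 0 := intervalIntegral.integral_same
  -- the family E
  set E : ℝ → ℝ → ℝ := fun lam x => Real.exp ((1 / ρ) * (C x - lam * x)) with hEdef
  have hEpos : ∀ lam x, 0 < E lam x := fun lam x => Real.exp_pos _
  have hEcont : ∀ lam, Continuous fun x => E lam x := fun lam => by
    apply Real.continuous_exp.comp
    exact continuous_const.mul (hCcont.sub (continuous_const.mul continuous_id))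
  have hE0 : ∀ lam, E lam 0 = 1 := by intro lam; simp [hEdef, hC0]
  have hEderiv : ∀ lam x, HasDerivAt (fun y => E lam y)
      (((b - β x - lam) / ρ) * E lam x) x := by
    intro lam x
    have h1 : HasDerivAt (fun y => (1 / ρ) * (C y - lam * y))
        ((1 / ρ) * ((b - β x) - lam)) x := by
      have := ((hCderiv x).sub ((hasDerivAt_id x).const_mul lam)).const_mul (1 / ρ)
      simpa using this
    have := h1.exp
    convert this using 1
    simp [hEdef]; ring
  -- inner integral identity
  have hinner : ∀ (lam : ℝ), ∀ x ∈ Icc (0:ℝ) 1,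
      (∫ s in (0:ℝ)..x, (b - α s - lam)) = C x - lam * x := by
    intro lam x hx
    have hsub : uIcc (0:ℝ) x ⊆ Icc 0 1 := by
      rw [uIcc_of_le hx.1]; exact Icc_subset_Icc le_rfl hx.2
    have h1 : (∫ s in (0:ℝ)..x, (b - α s - lam)) = ∫ s in (0:ℝ)..x, (b - β s - lam) := by
      apply intervalIntegral.integral_congr
      intro s hs
      simp only [hβeq s (hsub hs)]
    rw [h1]
    have h2 : (∫ s in (0:ℝ)..x, (b - β s - lam))
        = (∫ s in (0:ℝ)..x, (b - β s)) - ∫ s in (0:ℝ)..x, lam := by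
      apply intervalIntegral.integral_sub (hbβc.intervalIntegrable _ _)
        (intervalIntegrable_const)
    rw [h2, intervalIntegral.integral_const]
    simp [hCdef]; ring
  -- the function g
  set g : ℝ → ℝ := fun lam => ∫ x in (0:ℝ)..1, β x * E lam x with hgdef
  have hgint : ∀ lam, IntervalIntegrable (fun x => β x * E lam x) volume 0 1 :=
    fun lam => (hβc.mul (hEcont lam)).intervalIntegrable _ _
  have hgpos : ∀ lam, 0 < g lam := fun lam =>
    intervalIntegral.intervalIntegral_pos_of_pos (hgint lam)
      (fun x => mul_pos (hβpos x) (hEpos lam x)) one_pos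
  have hgcont : Continuous g := by
    apply intervalIntegral.continuous_parametric_intervalIntegral_of_continuous'
      (f := fun lam x => β x * E lam x) (μ := volume)
    apply Continuous.mul (hβc.comp continuous_snd)
    apply Real.continuous_exp.comp
    exact continuous_const.mul ((hCcont.comp continuous_snd).sub
      (continuous_fst.mul continuous_snd))
  have hganti : Antitone g := by
    intro l₁ l₂ hle
    apply intervalIntegral.integral_mono_on zero_le_one (hgint l₂) (hgint l₁)
    intro x hx
    apply mul_le_mul_of_nonneg_left _ (hβpos x).le
    apply Real.exp_le_exp.2
    have : l₁ * x ≤ l₂ * x := mul_le_mul_of_nonneg_right hle hx.1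
    have h1ρ : (0:ℝ) ≤ 1 / ρ := by positivity
    nlinarith
  -- relation between EigenRelation and g
  have hER : ∀ lam, EigenRelation ρ ω b α lam ↔ ρ * (lam / ω + 1) = g lam := by
    intro lam
    unfold EigenRelation
    have : (∫ x in (0:ℝ)..1,
        α x * Real.exp ((1 / ρ) * ∫ s in (0 : ℝ)..x, (b - α s - lam))) = g lam := by
      apply intervalIntegral.integral_congr
      intro x hx
      rw [uIcc_of_le zero_le_one] at hx
      simp only [hβeq x hx, hinner lam x hx]
      rfl
    rw [this]
  -- F strictly monotone
  set F : ℝ → ℝ := fun lam => ρ * (lam / ω + 1) - g lam with hFdef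
  have hFmono : StrictMono F := by
    intro l₁ l₂ hlt
    have h1 : g l₂ ≤ g l₁ := hganti hlt.le
    have h2 : ρ * (l₁ / ω + 1) < ρ * (l₂ / ω + 1) := by
      apply mul_lt_mul_of_pos_left _ hρ
      gcongr
    simp only [hFdef]; linarith
  have hFcont : Continuous F :=
    (continuous_const.mul ((continuous_id.div_const ω).add continuous_const)).sub hgcont
  -- root existence
  obtain ⟨lam₀, hlam₀⟩ : ∃ lam, F lam = 0 := by
    set a : ℝ := min 0 (ω * (g 0 / ρ - 1) - ω) with hadef
    set c : ℝ := max 0 (ω * (g 0 / ρ - 1) + ω) with hcdef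
    have hac : a ≤ c := le_trans (min_le_left _ _) (le_max_left _ _)
    have hFa : F a < 0 := by
      have h1 : g 0 ≤ g a := hganti (min_le_left _ _)
      have h2 : a ≤ ω * (g 0 / ρ - 1) - ω := min_le_right _ _
      have h3 : ρ * (a / ω + 1) ≤ ρ * ((ω * (g 0 / ρ - 1) - ω) / ω + 1) := by
        apply mul_le_mul_of_nonneg_left _ hρ.le
        gcongr
      have h4 : ρ * ((ω * (g 0 / ρ - 1) - ω) / ω + 1) = g 0 - ρ := by
        field_simp; ring
      simp only [hFdef]
      have : 0 < ρ := hρ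
      nlinarith [hgpos a]
    have hFc : 0 < F c := by
      have h1 : g c ≤ g 0 := hganti (le_max_left _ _)
      have h2 : ω * (g 0 / ρ - 1) + ω ≤ c := le_max_right _ _
      have h3 : ρ * ((ω * (g 0 / ρ - 1) + ω) / ω + 1) ≤ ρ * (c / ω + 1) := by
        apply mul_le_mul_of_nonneg_left _ hρ.le
        gcongr
      have h4 : ρ * ((ω * (g 0 / ρ - 1) + ω) / ω + 1) = g 0 + ρ := by
        field_simp; ring
      simp only [hFdef]
      nlinarith
    have := intermediate_value_Icc hac hFcont.continuousOn
    have h0mem : (0:ℝ) ∈ Icc (F a) (F c) := ⟨hFa.le, hFc.le⟩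
    obtain ⟨lam, _, hlam⟩ := this h0mem
    exact ⟨lam, hlam⟩
  -- I(lam) and positivity
  set I : ℝ → ℝ := fun lam => ∫ x in (0:ℝ)..1, E lam x with hIdef
  have hIpos : ∀ lam, 0 < I lam := fun lam =>
    intervalIntegral.intervalIntegral_pos_of_pos ((hEcont lam).intervalIntegrable _ _)
      (fun x => hEpos lam x) one_pos
  -- the key: any eigen solution determines everything
  have key : ∀ (lam : ℝ) (Ω : ℝ → ℝ) (A : ℝ), IsEigenSolution ρ ω b α lam Ω A →
      EigenRelation ρ ω b α lam ∧ Ω 0 * I lam = 1 ∧ A = ρ * Ω 0 / ω ∧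
      ∀ x ∈ Icc (0:ℝ) 1, Ω x = Ω 0 * E lam x := by
    intro lam Ω A ⟨⟨Ωd, hΩd⟩, hint, h0, hnorm, hpos, hA⟩
    -- N = 1/E
    set N : ℝ → ℝ := fun x => Real.exp (-((1 / ρ) * (C x - lam * x))) with hNdef
    have hNE : ∀ x, N x * E lam x = 1 := by
      intro x; simp only [hNdef, hEdef]
      rw [← Real.exp_add]; simp
    have hNderiv : ∀ x, HasDerivAt N (-((1 / ρ) * ((b - β x) - lam)) * N x) x := by
      intro x
      have h1 : HasDerivAt (fun y => -((1 / ρ) * (C y - lam * y)))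
          (-((1 / ρ) * ((b - β x) - lam))) x := by
        have := (((hCderiv x).sub ((hasDerivAt_id x).const_mul lam)).const_mul (1 / ρ)).neg
        simpa [Pi.neg_def] using this
      simpa [hNdef, mul_comm] using h1.exp
    set ψ : ℝ → ℝ := fun x => Ω x * N x with hψdef
    have hΩcont : ContinuousOn Ω (Icc 0 1) := fun x hx => ((hΩd x hx).1).continuousWithinAt
    have hψderiv0 : ∀ x ∈ Icc (0:ℝ) 1, HasDerivWithinAt ψ 0 (Icc 0 1) x := by
      intro x hx
      have hode := (hΩd x hx).2
      rw [← hβeq x hx] at hode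
      have hΩdval : Ωd x = (b - lam - β x) * Ω x / ρ := by
        field_simp
        linarith
      have H := ((hΩd x hx).1).mul ((hNderiv x).hasDerivWithinAt)
      have hval : Ωd x * N x + Ω x * (-((1 / ρ) * ((b - β x) - lam)) * N x) = 0 := by
        rw [hΩdval]; field_simp; ring
      rwa [hval] at H
    have hψconst : ∀ x ∈ Icc (0:ℝ) 1, ψ x = ψ 0 := by
      apply constant_of_has_deriv_right_zero
      · exact hΩcont.mul (Continuous.continuousOn (by
          apply Real.continuous_exp.comp
          exact (continuous_const.mul (hCcont.sub (continuous_const.mul continuous_id))).neg))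
      · intro x hx
        have hmem : Icc (0:ℝ) 1 ∈ nhdsWithin x (Ici x) := Icc_mem_nhdsGE_of_mem ⟨hx.1, hx.2⟩
        exact (hψderiv0 x ⟨hx.1, hx.2.le⟩).mono_of_mem_nhdsWithin hmem
    have hN0 : N 0 = 1 := by simp [hNdef, hC0]
    have hΩform : ∀ x ∈ Icc (0:ℝ) 1, Ω x = Ω 0 * E lam x := by
      intro x hx
      have h1 := hψconst x hx
      simp only [hψdef, hN0, mul_one] at h1
      calc Ω x = Ω x * N x * E lam x := by rw [mul_assoc, hNE x, mul_one]
        _ = Ω 0 * E lam x := by rw [h1]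
    -- normalization
    have hInorm : Ω 0 * I lam = 1 := by
      rw [← hnorm]
      have : (∫ x in (0:ℝ)..1, Ω x) = ∫ x in (0:ℝ)..1, Ω 0 * E lam x := by
        apply intervalIntegral.integral_congr
        intro x hx
        rw [uIcc_of_le zero_le_one] at hx
        simp only [hΩform x hx]
      rw [this, intervalIntegral.integral_const_mul]
    have hΩ0pos : 0 < Ω 0 := hpos 0 ⟨le_rfl, zero_le_one⟩
    have hAval : A = ρ * Ω 0 / ω := by
      rw [h0]; field_simp
    have hERlam : EigenRelation ρ ω b α lam := by
      rw [hER]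
      have h1 : (∫ x in (0:ℝ)..1, α x * Ω x) = Ω 0 * g lam := by
        have : (∫ x in (0:ℝ)..1, α x * Ω x)
            = ∫ x in (0:ℝ)..1, Ω 0 * (β x * E lam x) := by
          apply intervalIntegral.integral_congr
          intro x hx
          rw [uIcc_of_le zero_le_one] at hx
          simp only [hβeq x hx, hΩform x hx]; ring
        rw [this, intervalIntegral.integral_const_mul]
      rw [h1, hAval] at hint
      have hω' : ω ≠ 0 := hω.ne'
      field_simp at hint ⊢
      nlinarith [hΩ0pos]
    exact ⟨hERlam, hInorm, hAval, hΩform⟩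
  -- unique root of EigenRelation
  have hERlam₀ : EigenRelation ρ ω b α lam₀ := by
    rw [hER]; simp only [hFdef] at hlam₀; linarith
  have hERuniq : ∀ lam, EigenRelation ρ ω b α lam → lam = lam₀ := by
    intro lam hlam
    rw [hER] at hlam hERlam₀
    have : F lam = F lam₀ := by simp only [hFdef]; rw [hlam, hERlam₀]; ring
    exact hFmono.injective this
  refine ⟨⟨lam₀, hERlam₀, hERuniq⟩, ?_, ?_, ?_⟩
  · -- existence of eigen solution
    refine ⟨lam₀, fun x => E lam₀ x / I lam₀, ρ / (ω * I lam₀), ?_⟩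
    have hI := hIpos lam₀
    have hIne : I lam₀ ≠ 0 := hI.ne'
    refine ⟨⟨fun x => ((b - lam₀ - β x) / ρ) * (E lam₀ x / I lam₀), ?_⟩, ?_, ?_, ?_, ?_, ?_⟩
    · intro x hx
      constructor
      · have := ((hEderiv lam₀ x).div_const (I lam₀)).hasDerivWithinAt
          (s := Icc (0:ℝ) 1)
        convert this using 1
        · rfl
        · rfl
        · dsimp only; ring
      · rw [← hβeq x hx]; field_simp
    · have h1 : (∫ x in (0:ℝ)..1, α x * (E lam₀ x / I lam₀))
          = (g lam₀) / I lam₀ := by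
        have : (∫ x in (0:ℝ)..1, α x * (E lam₀ x / I lam₀))
            = ∫ x in (0:ℝ)..1, (β x * E lam₀ x) / I lam₀ := by
          apply intervalIntegral.integral_congr
          intro x hx
          rw [uIcc_of_le zero_le_one] at hx
          simp only [hβeq x hx]; ring
        rw [this, intervalIntegral.integral_div]
      rw [h1]
      rw [hER] at hERlam₀
      rw [← hERlam₀]
      field_simp
    · show E lam₀ 0 / I lam₀ = _
      rw [hE0]; field_simp
    · rw [intervalIntegral.integral_div, div_eq_one_iff_eq hIne]
    · exact fun x hx => div_pos (hEpos _ _) hI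
    · positivity
  · -- uniqueness of eigen solutions
    intro lam₁ lam₂ Ω₁ Ω₂ A₁ A₂ h₁ h₂
    obtain ⟨hER₁, hI₁, hA₁, hΩf₁⟩ := key lam₁ Ω₁ A₁ h₁
    obtain ⟨hER₂, hI₂, hA₂, hΩf₂⟩ := key lam₂ Ω₂ A₂ h₂
    have hlameq : lam₁ = lam₂ := by rw [hERuniq lam₁ hER₁, hERuniq lam₂ hER₂]
    subst hlameq
    have hΩ0eq : Ω₁ 0 = Ω₂ 0 := by
      have hI := hIpos lam₁
      have : Ω₁ 0 * I lam₁ = Ω₂ 0 * I lam₁ := by rw [hI₁, hI₂]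
      exact mul_right_cancel₀ hI.ne' this
    refine ⟨rfl, by rw [hA₁, hA₂, hΩ0eq], ?_⟩
    intro x hx
    rw [hΩf₁ x hx, hΩf₂ x hx, hΩ0eq]
  · -- sign characterization
    intro lam hlam
    have hlameq := hERuniq lam hlam
    have hFlam : F lam = 0 := by
      rw [hER] at hlam; simp only [hFdef]; linarith
    have hdisp : (∫ x in (0:ℝ)..1,
        α x * Real.exp ((1 / ρ) * ∫ s in (0 : ℝ)..x, (b - α s))) = g 0 := by
      apply intervalIntegral.integral_congr
      intro x hx
      rw [uIcc_of_le zero_le_one] at hx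
      simp only [hβeq x hx]
      congr 2
      have h1 : (∫ s in (0:ℝ)..x, (b - α s)) = C x - 0 * x := by
        have := hinner 0 x hx
        simpa using this
      rw [h1]
    have hF0 : F 0 = ρ - g 0 := by simp [hFdef]
    constructor
    · rw [hdisp]
      constructor
      · intro h
        have : F 0 < F lam := hFmono h
        rw [hFlam, hF0] at this; linarith
      · intro h
        by_contra hc
        push_neg at hc
        have : F lam ≤ F 0 := hFmono.monotone hc
        rw [hFlam, hF0] at this; linarith
    · rw [hdisp]
      constructor
      · intro h
        have : F lam < F 0 := hFmono h
        rw [hFlam, hF0] at this; linarith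
      · intro h
        by_contra hc
        push_neg at hc
        have : F 0 ≤ F lam := hFmono.monotone hc
        rw [hFlam, hF0] at this; linarith
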